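/- Let U be a d×d unitary and A any d×d complex matrix, and set ψ = vec(A), φ = vec(UA). Then the partial transpose of |ψ⟩⟨ψ| − |φ⟩⟨φ| factors as (id ⊗ Aᵀ) F (id − Uᵀ ⊗ U*) (id ⊗ A*), and hence has rank at most d² − d. -/

import Mathlib

open Matrix Kronecker BigOperators
open scoped ComplexOrder

noncomputable def traceNorm {n : Type*} [Fintype n] [DecidableEq n] (X : Matrix n n ℂ) : ℝ :=
  (((Matrix.posSemidef_conjTranspose_mul_self X).1.eigenvectorUnitary : Matrix n n ℂ) *
      diagonal (((↑) : ℝ → ℂ) ∘ Real.sqrt ∘ (Matrix.posSemidef_conjTranspose_mul_self X).1.eigenvalues) *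
      (star ((Matrix.posSemidef_conjTranspose_mul_self X).1.eigenvectorUnitary : Matrix n n ℂ))).trace.re

noncomputable def hsNorm {n : Type*} [Fintype n] (X : Matrix n n ℂ) : ℝ :=
  Real.sqrt ((Xᴴ * X).trace.re)

noncomputable def singularValues {n : Type*} [Fintype n] [DecidableEq n] (Y : Matrix n n ℂ) :
    n → ℝ :=
  fun i => Real.sqrt ((Matrix.posSemidef_conjTranspose_mul_self Y).1.eigenvalues i)

/-- Partial transpose on the first tensor factor. -/
def ptransp {d k : ℕ} (X : Matrix (Fin d × Fin k) (Fin d × Fin k) ℂ) :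
    Matrix (Fin d × Fin k) (Fin d × Fin k) ℂ :=
  fun p q => X (q.1, p.2) (p.1, q.2)

/-- Partial trace over the first tensor factor. -/
noncomputable def ptraceH {d k : ℕ} (X : Matrix (Fin d × Fin k) (Fin d × Fin k) ℂ) :
    Matrix (Fin k) (Fin k) ℂ :=
  fun j j' => ∑ i, X (i, j) (i, j')

def vec {d : ℕ} (A : Matrix (Fin d) (Fin d) ℂ) : Fin d × Fin d → ℂ := fun p => A p.1 p.2

/-- Outer product |v⟩⟨w|. -/
def outer {n : Type*} (v w : n → ℂ) : Matrix n n ℂ := fun i j => v i * star (w j)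

/-- The swap operator F(e_i ⊗ e_j) = e_j ⊗ e_i. -/
def swapOp (d : ℕ) : Matrix (Fin d × Fin d) (Fin d × Fin d) ℂ :=
  fun p q => if p.1 = q.2 ∧ p.2 = q.1 then 1 else 0

/-- Blockwise action of Φ ⊗ id on operators on H ⊗ K. -/
def tensorExt {d k : ℕ} (Φ : Matrix (Fin d) (Fin d) ℂ → Matrix (Fin d) (Fin d) ℂ)
    (Z : Matrix (Fin d × Fin k) (Fin d × Fin k) ℂ) :
    Matrix (Fin d × Fin k) (Fin d × Fin k) ℂ :=
  fun p q => Φ (fun a b => Z (a, p.2) (b, q.2)) p.1 q.1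

/-- Diamond norm (stabilized at ancilla dimension d). -/
noncomputable def diamondNorm {d : ℕ}
    (Φ : Matrix (Fin d) (Fin d) ℂ → Matrix (Fin d) (Fin d) ℂ) : ℝ :=
  ⨆ ρ : {ρ : Matrix (Fin d × Fin d) (Fin d × Fin d) ℂ // ρ.PosSemidef ∧ ρ.trace = 1},
    traceNorm (tensorExt Φ ρ.1)


section AuxProof

open Matrix Kronecker
open scoped ComplexOrder

private lemma normal_sq_ker' {n : Type*} [Fintype n] (N : Matrix n n ℂ) (hN : Nᴴ * N = N * Nᴴ)
    (x : n → ℂ) (h : N *ᵥ (N *ᵥ x) = 0) : N *ᵥ x = 0 := by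
  set w := N *ᵥ x with hw
  have h1 : Nᴴ *ᵥ w = 0 := by
    apply dotProduct_star_self_eq_zero.mp
    calc star (Nᴴ *ᵥ w) ⬝ᵥ (Nᴴ *ᵥ w)
        = (star w ᵥ* N) ⬝ᵥ (Nᴴ *ᵥ w) := by rw [star_mulVec, conjTranspose_conjTranspose]
      _ = star w ⬝ᵥ (N *ᵥ (Nᴴ *ᵥ w)) := by rw [← dotProduct_mulVec]
      _ = 0 := by
          rw [mulVec_mulVec, ← hN, ← mulVec_mulVec, h, mulVec_zero, dotProduct_zero]
  apply dotProduct_star_self_eq_zero.mp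
  calc star w ⬝ᵥ w = (star x ᵥ* Nᴴ) ⬝ᵥ w := by rw [hw, star_mulVec]
    _ = star x ⬝ᵥ (Nᴴ *ᵥ w) := by rw [← dotProduct_mulVec]
    _ = 0 := by rw [h1, dotProduct_zero]

private lemma normal_pow_ker' {n : Type*} [Fintype n] [DecidableEq n] (N : Matrix n n ℂ)
    (hN : Nᴴ * N = N * Nᴴ) :
    ∀ (l : ℕ) (x : n → ℂ), (N ^ (l + 1)) *ᵥ x = 0 → N *ᵥ x = 0 := by
  intro l
  induction l with
  | zero => intro x hx; simpa using hx
  | succ l ih =>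
    intro x hx
    have h2 : (N ^ (l + 1)) *ᵥ (N *ᵥ x) = 0 := by
      rw [mulVec_mulVec, ← pow_succ, hx]
    exact normal_sq_ker' N hN x (ih _ h2)

private lemma unitary_diag' {d : ℕ} (U : Matrix (Fin d) (Fin d) ℂ)
    (hU : U ∈ Matrix.unitaryGroup (Fin d) ℂ) :
    ∃ (B : Matrix (Fin d) (Fin d) ℂ) (g : Fin d → ℂ), IsUnit B ∧ (∀ k, g k ≠ 0) ∧
      U * B = B * Matrix.diagonal g := by
  classical
  have hU1 : Uᴴ * U = 1 := hU.1
  have hU2 : U * Uᴴ = 1 := hU.2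
  set f : Module.End ℂ (Fin d → ℂ) := Matrix.toLinAlgEquiv' U with hf
  have happ : ∀ x, f x = U *ᵥ x := fun x => rfl
  have hmax : ∀ μ : ℂ, f.maxGenEigenspace μ ≤ f.eigenspace μ := by
    intro μ x hx
    rw [Module.End.mem_maxGenEigenspace] at hx
    obtain ⟨k, hk⟩ := hx
    rw [Module.End.mem_eigenspace_iff]
    set N : Matrix (Fin d) (Fin d) ℂ := U - μ • 1 with hNdef
    have hNf : f - μ • 1 = Matrix.toLinAlgEquiv' N := by
      rw [hNdef, map_sub, _root_.map_smul, _root_.map_one, hf]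
    have hNk : ∀ m : ℕ, ((f - μ • (1 : Module.End ℂ (Fin d → ℂ))) ^ m) x = (N ^ m) *ᵥ x := by
      intro m; rw [hNf, ← map_pow]; rfl
    have hN : Nᴴ * N = N * Nᴴ := by
      rw [hNdef]
      simp only [conjTranspose_sub, conjTranspose_smul, conjTranspose_one, sub_mul, mul_sub,
        hU1, hU2, Matrix.smul_mul, Matrix.mul_smul, Matrix.one_mul, Matrix.mul_one, smul_smul]
      module
    have hx0 : N *ᵥ x = 0 := by
      rcases k with _ | l
      · have : x = 0 := by simpa [hNk 0] using hk
        simp [this]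
      · exact normal_pow_ker' N hN l x (by rw [← hNk]; exact hk)
    have : U *ᵥ x - μ • x = 0 := by
      simpa [hNdef, sub_mulVec, smul_mulVec] using hx0
    rw [happ]
    linear_combination (norm := module) this
  have htop : ⨆ μ : ℂ, f.eigenspace μ = ⊤ := by
    apply top_unique
    rw [← Module.End.iSup_maxGenEigenspace_eq_top f]
    exact iSup_mono hmax
  set S : Set (Fin d → ℂ) := {x | ∃ μ : ℂ, f x = μ • x} with hS
  have hspan : Submodule.span ℂ S = ⊤ := by
    apply top_unique
    rw [← htop]
    refine iSup_le fun μ x hx => Submodule.subset_span ⟨μ, Module.End.mem_eigenspace_iff.mp hx⟩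
  obtain ⟨b, hbS, hspanb, hli⟩ := exists_linearIndependent ℂ S
  let hbasis : Module.Basis b ℂ (Fin d → ℂ) :=
    Module.Basis.mk hli (by rw [Subtype.range_coe, hspanb, hspan])
  haveI : Fintype b := IsNoetherian.fintypeBasisIndex hbasis
  have hcard : Fintype.card b = d := by
    have h1 := Module.finrank_eq_card_basis hbasis
    have h2 : Module.finrank ℂ (Fin d → ℂ) = d := by simp
    omega
  let e : Fin d ≃ b := (Fintype.equivFinOfCardEq hcard).symm
  let c : Module.Basis (Fin d) ℂ (Fin d → ℂ) := hbasis.reindex e.symm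
  have hc : ∀ k, c k ∈ S := by
    intro k
    have : c k = ↑(e k) := by
      simp only [c, Module.Basis.reindex_apply, Equiv.symm_symm, hbasis, Module.Basis.mk_apply]
    rw [this]
    exact hbS (e k).2
  choose g hg using fun k => hc k
  set B : Matrix (Fin d) (Fin d) ℂ := (Pi.basisFun ℂ (Fin d)).toMatrix c with hB
  have hBapp : ∀ i k, B i k = c k i := by
    intro i k; rw [hB, Module.Basis.toMatrix_apply, Pi.basisFun_repr]
  refine ⟨B, g, ?_, ?_, ?_⟩
  · letI := (Pi.basisFun ℂ (Fin d)).invertibleToMatrix c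
    exact isUnit_of_invertible B
  · intro k hk0
    have h0 : U *ᵥ c k = 0 := by rw [← happ, hg k, hk0, zero_smul]
    have : c k = 0 := by
      calc c k = (Uᴴ * U) *ᵥ c k := by rw [hU1, one_mulVec]
        _ = Uᴴ *ᵥ (U *ᵥ c k) := by rw [← mulVec_mulVec]
        _ = 0 := by rw [h0, mulVec_zero]
    exact c.ne_zero k this
  · ext i k
    rw [mul_apply, mul_diagonal, hBapp]
    have : (∑ j, U i j * B j k) = (U *ᵥ c k) i := by
      simp [mulVec, dotProduct, hBapp]
    rw [this, ← happ, hg k]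
    simp [mul_comm]

private lemma rank_one_sub_kron' {d : ℕ} (U : Matrix (Fin d) (Fin d) ℂ)
    (hU : U ∈ Matrix.unitaryGroup (Fin d) ℂ) :
    ((1 : Matrix (Fin d × Fin d) (Fin d × Fin d) ℂ) - Uᵀ ⊗ₖ U.map (starRingEnd ℂ)).rank ≤
      d ^ 2 - d := by
  classical
  obtain ⟨B, g, hB, hg, hUB⟩ := unitary_diag' U hU
  have hU1 : Uᴴ * U = 1 := hU.1
  have hBdet : IsUnit B.det := (Matrix.isUnit_iff_isUnit_det B).mp hB
  have hBB : B * B⁻¹ = 1 := Matrix.mul_nonsing_inv B hBdet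
  have hBB' : B⁻¹ * B = 1 := Matrix.nonsing_inv_mul B hBdet
  have hdd : Matrix.diagonal g * Matrix.diagonal (fun k => (g k)⁻¹) = 1 := by
    rw [Matrix.diagonal_mul_diagonal]
    have : (fun k => g k * (g k)⁻¹) = fun _ => (1:ℂ) := funext fun k => mul_inv_cancel₀ (hg k)
    rw [this, Matrix.diagonal_one]
  have hUhB : Uᴴ * B = B * Matrix.diagonal (fun k => (g k)⁻¹) := by
    calc Uᴴ * B = Uᴴ * (B * Matrix.diagonal g * Matrix.diagonal (fun k => (g k)⁻¹)) := by
          rw [mul_assoc B, hdd, mul_one]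
      _ = Uᴴ * (U * B * Matrix.diagonal (fun k => (g k)⁻¹)) := by rw [hUB]
      _ = (Uᴴ * U) * (B * Matrix.diagonal (fun k => (g k)⁻¹)) := by
          noncomm_ring
      _ = B * Matrix.diagonal (fun k => (g k)⁻¹) := by rw [hU1, one_mul]
  set P : Matrix (Fin d) (Fin d) ℂ := B.map (starRingEnd ℂ) with hP
  set Q : Matrix (Fin d) (Fin d) ℂ := B⁻¹.map (starRingEnd ℂ) with hQ
  have hQP : Q * P = 1 := by
    rw [hP, hQ, ← Matrix.map_mul, hBB', Matrix.map_one _ (map_zero _) (map_one _)]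
  have hmapT : Uᴴ.map (starRingEnd ℂ) = Uᵀ := by
    ext i j; simp [Matrix.conjTranspose_apply]
  have hmapC : ∀ (X Y : Matrix (Fin d) (Fin d) ℂ), (X * Y).map (starRingEnd ℂ) =
      X.map (starRingEnd ℂ) * Y.map (starRingEnd ℂ) := fun X Y => Matrix.map_mul
  have hdiagmap : ∀ h : Fin d → ℂ, (Matrix.diagonal h).map (starRingEnd ℂ) =
      Matrix.diagonal (fun k => starRingEnd ℂ (h k)) := fun h => Matrix.diagonal_map (map_zero _)
  have hT : Uᵀ * P = P * Matrix.diagonal (fun k => starRingEnd ℂ ((g k)⁻¹)) := by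
    have := congrArg (Matrix.map · (starRingEnd ℂ)) hUhB
    simpa [hmapC, hmapT, hdiagmap] using this
  have hC : U.map (starRingEnd ℂ) * P = P * Matrix.diagonal (fun k => starRingEnd ℂ (g k)) := by
    have := congrArg (Matrix.map · (starRingEnd ℂ)) hUB
    simpa [hmapC, hdiagmap] using this
  set W : Matrix (Fin d × Fin d) (Fin d) ℂ := Matrix.of (fun p k => P p.1 k * P p.2 k) with hW
  set C : Matrix (Fin d) (Fin d × Fin d) ℂ := Matrix.of (fun k p => Q k p.1 * Q k p.2) with hCdef
  have claim1 : (Uᵀ ⊗ₖ U.map (starRingEnd ℂ)) * W = W := by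
    ext ⟨i, j⟩ k
    show (∑ p : Fin d × Fin d, (Uᵀ ⊗ₖ U.map (starRingEnd ℂ)) (i,j) p * W p k) = P i k * P j k
    calc (∑ p : Fin d × Fin d, (Uᵀ ⊗ₖ U.map (starRingEnd ℂ)) (i,j) p * W p k)
        = ∑ a, ∑ b, (Uᵀ i a * P a k) * (U.map (starRingEnd ℂ) j b * P b k) := by
          rw [Fintype.sum_prod_type]
          exact Finset.sum_congr rfl fun a _ => Finset.sum_congr rfl fun b _ => by
            simp only [kroneckerMap_apply, hW, Matrix.of_apply]; ring
      _ = (∑ a, Uᵀ i a * P a k) * (∑ b, U.map (starRingEnd ℂ) j b * P b k) := by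
          rw [Finset.sum_mul_sum]
      _ = (Uᵀ * P) i k * ((U.map (starRingEnd ℂ)) * P) j k := by
          rw [Matrix.mul_apply, Matrix.mul_apply]
      _ = (P i k * starRingEnd ℂ ((g k)⁻¹)) * (P j k * starRingEnd ℂ (g k)) := by
          rw [hT, hC, Matrix.mul_diagonal, Matrix.mul_diagonal]
      _ = P i k * P j k := by
          have hgc : (starRingEnd ℂ) (g k) ≠ 0 := by
            simpa using hg k
          rw [map_inv₀]
          field_simp
  have claim2 : C * W = 1 := by
    ext k l
    show (∑ p : Fin d × Fin d, C k p * W p l) = (1 : Matrix (Fin d) (Fin d) ℂ) k l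
    calc (∑ p : Fin d × Fin d, C k p * W p l)
        = ∑ i, ∑ j, (Q k i * P i l) * (Q k j * P j l) := by
          rw [Fintype.sum_prod_type]
          exact Finset.sum_congr rfl fun a _ => Finset.sum_congr rfl fun b _ => by
            simp only [hCdef, hW, Matrix.of_apply]; ring
      _ = (∑ i, Q k i * P i l) * (∑ j, Q k j * P j l) := by rw [Finset.sum_mul_sum]
      _ = (Q * P) k l * (Q * P) k l := by rw [Matrix.mul_apply]
      _ = (1 : Matrix (Fin d) (Fin d) ℂ) k l := by
          rw [hQP]; by_cases h : k = l <;> simp [Matrix.one_apply, h]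
  have hMW : ((1 : Matrix (Fin d × Fin d) (Fin d × Fin d) ℂ) - Uᵀ ⊗ₖ U.map (starRingEnd ℂ)) * W
      = 0 := by
    rw [Matrix.sub_mul, Matrix.one_mul, claim1, sub_self]
  have h1 := Matrix.rank_add_rank_le_card_of_mul_eq_zero hMW
  have h2 : d ≤ W.rank := by
    have h3 := Matrix.rank_mul_le_right C W
    rw [claim2, Matrix.rank_one] at h3
    simpa using h3
  rw [Fintype.card_prod, Fintype.card_fin] at h1
  have : d * d = d ^ 2 := by ring
  omega

end AuxProof

section AuxFact

open Matrix Kronecker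

private lemma ptransp_factorization' {d : ℕ} (U A : Matrix (Fin d) (Fin d) ℂ) :
    ptransp (outer (_root_.vec A) (_root_.vec A) - outer (_root_.vec (U * A)) (_root_.vec (U * A))) =
      ((1 : Matrix (Fin d) (Fin d) ℂ) ⊗ₖ Aᵀ) * swapOp d *
        ((1 : Matrix (Fin d × Fin d) (Fin d × Fin d) ℂ) - Uᵀ ⊗ₖ U.map (starRingEnd ℂ)) *
        ((1 : Matrix (Fin d) (Fin d) ℂ) ⊗ₖ A.map (starRingEnd ℂ)) := by
  ext ⟨i, j⟩ ⟨a, b⟩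
  simp only [ptransp, outer, _root_.vec, Matrix.sub_apply, Matrix.mul_apply, Matrix.one_apply,
    Matrix.kroneckerMap_apply, swapOp, Matrix.map_apply, Matrix.transpose_apply,
    Fintype.sum_prod_type, mul_ite, ite_mul, mul_zero, zero_mul, mul_one, one_mul,
    Finset.sum_ite_eq, Finset.sum_ite_eq', Finset.mem_univ, if_true, ite_and,
    Matrix.sub_apply, sub_mul, mul_sub, Finset.sum_sub_distrib]
  simp [Matrix.mul_apply, Finset.mul_sum, Finset.sum_mul, map_sum, _root_.map_mul]
  exact Finset.sum_congr rfl fun x _ => Finset.sum_congr rfl fun y _ => by ring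

end AuxFact

theorem ptransp_outer_diff_factorization {d : ℕ} (U A : Matrix (Fin d) (Fin d) ℂ)
    (hU : U ∈ Matrix.unitaryGroup (Fin d) ℂ) :
    ptransp (outer (_root_.vec A) (_root_.vec A) - outer (_root_.vec (U * A)) (_root_.vec (U * A))) =
      ((1 : Matrix (Fin d) (Fin d) ℂ) ⊗ₖ Aᵀ) * swapOp d *
        ((1 : Matrix (Fin d × Fin d) (Fin d × Fin d) ℂ) - Uᵀ ⊗ₖ U.map (starRingEnd ℂ)) *
        ((1 : Matrix (Fin d) (Fin d) ℂ) ⊗ₖ A.map (starRingEnd ℂ)) ∧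
    (ptransp (outer (_root_.vec A) (_root_.vec A) - outer (_root_.vec (U * A)) (_root_.vec (U * A)))).rank ≤
      d ^ 2 - d := by
  constructor
  · exact ptransp_factorization' U A
  · rw [ptransp_factorization' U A]
    calc (((1 : Matrix (Fin d) (Fin d) ℂ) ⊗ₖ Aᵀ) * swapOp d *
          ((1 : Matrix (Fin d × Fin d) (Fin d × Fin d) ℂ) - Uᵀ ⊗ₖ U.map (starRingEnd ℂ)) *
          ((1 : Matrix (Fin d) (Fin d) ℂ) ⊗ₖ A.map (starRingEnd ℂ))).rank
        ≤ (((1 : Matrix (Fin d) (Fin d) ℂ) ⊗ₖ Aᵀ) * swapOp d *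
          ((1 : Matrix (Fin d × Fin d) (Fin d × Fin d) ℂ) -
            Uᵀ ⊗ₖ U.map (starRingEnd ℂ))).rank := Matrix.rank_mul_le_left _ _
      _ ≤ ((1 : Matrix (Fin d × Fin d) (Fin d × Fin d) ℂ) -
            Uᵀ ⊗ₖ U.map (starRingEnd ℂ)).rank := Matrix.rank_mul_le_right _ _
      _ ≤ d ^ 2 - d := rank_one_sub_kron' U hU
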